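/- arXiv:2512.21146 — 2 statements merged into one kernel-verified Lean document; each statement's English description precedes it below -/
import Mathlib

section
/- Let d ≥ 1 and x ∈ ℝ^d with x_i > 0 for all i, and define f on the open positive orthant by f(x) = 1 + Σ_{i=1}^d (x_i − log x_i). Let ν and μ_1, …, μ_d be (nonnegative Borel) measures on ℝ^d, each concentrated on {z : z_j ≥ 0 for all j}, such that ∫ Σ_{j=1}^d z_j dν(z) < ∞ and, for each i, ∫ ( z_i + Σ_{j≠i} z_j ) dμ_i(z) < ∞. Then all the integrals below are well defined and ∫ ( f(x+z) − f(x) ) dν(z) + Σ_{i=1}^d x_i ∫ ( f(x+z) − f(x) − (1 − 1/x_i) z_i ) dμ_i(z) ≤ ∫ Σ_{i=1}^d z_i dν(z) + Σ_{i=1}^d ( x_i ∫ Σ_{j≠i} z_j dμ_i(z) + ∫ z_i dμ_i(z) ). -/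
open MeasureTheory Real BigOperators

lemma term_bounds (a t : ℝ) (ha : 0 < a) (ht : 0 ≤ t) :
    (1 - 1/a) * t ≤ t - (Real.log (a + t) - Real.log a) ∧
    t - (Real.log (a + t) - Real.log a) ≤ t := by
  constructor
  · have h1 : Real.log (a + t) - Real.log a = Real.log ((a + t) / a) := by
      rw [Real.log_div (by linarith) ha.ne']
    have h2 : Real.log ((a + t) / a) ≤ (a + t) / a - 1 :=
      Real.log_le_sub_one_of_pos (by positivity)
    have h3 : (a + t) / a - 1 = t / a := by field_simp; ring
    have h4 : (1 - 1/a) * t = t - t / a := by field_simp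
    linarith
  · have : Real.log a ≤ Real.log (a + t) :=
      Real.log_le_log ha (by linarith)
    linarith

/-- Bound for the nonlocal (jump) part `L₂f(x)` of the generator of a CIMBI
process applied to the Lyapunov function `f(x) = 1 + Σᵢ (xᵢ − log xᵢ)`, in the
case where the branching Lévy measures have finite first moments. -/
theorem cimbi_nonlocal_generator_bound
    (d : ℕ) (hd : 1 ≤ d) (x : Fin d → ℝ) (hx : ∀ i, 0 < x i)
    (f : (Fin d → ℝ) → ℝ)
    (hf : ∀ y : Fin d → ℝ, f y = 1 + ∑ i, (y i - Real.log (y i)))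
    (ν : Measure (Fin d → ℝ)) (μ : Fin d → Measure (Fin d → ℝ))
    (hν : ∀ᵐ z ∂ν, ∀ j, 0 ≤ z j)
    (hμ : ∀ i, ∀ᵐ z ∂(μ i), ∀ j, 0 ≤ z j)
    (hνint : Integrable (fun z => ∑ j, z j) ν)
    (hμint : ∀ i, Integrable
      (fun z => z i + ∑ j ∈ Finset.univ.erase i, z j) (μ i)) :
    Integrable (fun z => f (x + z) - f x) ν ∧
    (∀ i, Integrable (fun z => f (x + z) - f x - (1 - 1 / x i) * z i) (μ i)) ∧
    (∫ z, (f (x + z) - f x) ∂ν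
        + ∑ i, x i * ∫ z, (f (x + z) - f x - (1 - 1 / x i) * z i) ∂(μ i)
      ≤ ∫ z, (∑ i, z i) ∂ν
        + ∑ i, (x i * ∫ z, (∑ j ∈ Finset.univ.erase i, z j) ∂(μ i)
            + ∫ z, z i ∂(μ i))) := by
  set D : (Fin d → ℝ) → ℝ :=
    fun z => ∑ j, (z j - (Real.log (x j + z j) - Real.log (x j))) with hD
  set K : ℝ := 1 + ∑ j, 1 / x j with hK
  have hKj : ∀ j : Fin d, 1 + 1 / x j ≤ K := by
    intro j
    have h0 : (1 : ℝ) / x j ≤ ∑ k, 1 / x k :=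
      Finset.single_le_sum (f := fun k => 1 / x k)
        (fun k _ => le_of_lt (by have := hx k; positivity)) (Finset.mem_univ j)
    simp only [hK]; linarith
  have hK0 : 1 ≤ K := by
    have h0 : (0:ℝ) ≤ ∑ j, 1 / x j :=
      Finset.sum_nonneg fun j _ => le_of_lt (by have := hx j; positivity)
    simp only [hK]; linarith
  -- identity
  have hDeq : ∀ z : Fin d → ℝ, f (x + z) - f x = D z := by
    intro z
    rw [hf, hf]
    simp only [Pi.add_apply, hD]
    rw [add_sub_add_left_eq_sub, ← Finset.sum_sub_distrib]
    exact Finset.sum_congr rfl fun j _ => by ring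
  have hDmeas : Measurable D := by
    apply Finset.measurable_sum
    intro j _
    exact (measurable_pi_apply j).sub
      ((Real.measurable_log.comp ((measurable_const.add (measurable_pi_apply j)))).sub
        measurable_const)
  -- pointwise bounds for nonneg z
  have hUpper : ∀ z : Fin d → ℝ, (∀ j, 0 ≤ z j) → D z ≤ ∑ j, z j := by
    intro z hz
    exact Finset.sum_le_sum fun j _ => (term_bounds (x j) (z j) (hx j) (hz j)).2
  have hAbs : ∀ z : Fin d → ℝ, (∀ j, 0 ≤ z j) → |D z| ≤ K * ∑ j, z j := by
    intro z hz
    have h1 : ∀ j : Fin d, |z j - (Real.log (x j + z j) - Real.log (x j))| ≤ K * z j := by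
      intro j
      obtain ⟨hl, hu⟩ := term_bounds (x j) (z j) (hx j) (hz j)
      rw [abs_le]
      have h2 := hKj j
      have h3 : 0 < 1 / x j := by have := hx j; positivity
      constructor
      · have h4 : -(K * z j) ≤ (1 - 1 / x j) * z j := by nlinarith [hz j]
        exact h4.trans hl
      · nlinarith [hz j]
    calc |D z| ≤ ∑ j, |z j - (Real.log (x j + z j) - Real.log (x j))| :=
          Finset.abs_sum_le_sum_abs _ _
      _ ≤ ∑ j, K * z j := Finset.sum_le_sum fun j _ => h1 j
      _ = K * ∑ j, z j := (Finset.mul_sum _ _ _).symm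
  -- integrability wrt ν
  have hν1 : Integrable (fun z => f (x + z) - f x) ν := by
    have : Integrable D ν := by
      refine Integrable.mono' (hνint.const_mul K) hDmeas.aestronglyMeasurable ?_
      filter_upwards [hν] with z hz
      simpa using hAbs z hz
    simpa only [hDeq] using this
  -- integrability wrt μ i
  have hS : ∀ i : Fin d, Integrable (fun z => ∑ j ∈ Finset.univ.erase i, z j) (μ i) := by
    intro i
    refine Integrable.mono' (hμint i) ?_ ?_
    · exact (Finset.measurable_sum _ fun j _ => measurable_pi_apply j).aestronglyMeasurable
    · filter_upwards [hμ i] with z hz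
      have h1 : 0 ≤ ∑ j ∈ Finset.univ.erase i, z j :=
        Finset.sum_nonneg fun j _ => hz j
      rw [Real.norm_eq_abs, abs_of_nonneg h1]; linarith [hz i]
  have hzi : ∀ i : Fin d, Integrable (fun z => z i) (μ i) := by
    intro i
    refine Integrable.mono' (hμint i) (measurable_pi_apply i).aestronglyMeasurable ?_
    filter_upwards [hμ i] with z hz
    have h1 : 0 ≤ ∑ j ∈ Finset.univ.erase i, z j :=
      Finset.sum_nonneg fun j _ => hz j
    rw [Real.norm_eq_abs, abs_of_nonneg (hz i)]; linarith
  have hsum_split : ∀ (i : Fin d) (z : Fin d → ℝ),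
      ∑ j, z j = z i + ∑ j ∈ Finset.univ.erase i, z j := by
    intro i z
    exact (Finset.add_sum_erase _ _ (Finset.mem_univ i)).symm
  have hμ1 : ∀ i, Integrable (fun z => f (x + z) - f x - (1 - 1 / x i) * z i) (μ i) := by
    intro i
    have : Integrable (fun z => D z - (1 - 1 / x i) * z i) (μ i) := by
      refine Integrable.mono' ((hμint i).const_mul (2 * K + 1))
        ((hDmeas.sub ((measurable_pi_apply i).const_mul _)).aestronglyMeasurable) ?_
      filter_upwards [hμ i] with z hz
      have h1 := hAbs z hz
      have h2 : |(1 - 1 / x i) * z i| ≤ K * z i := by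
        rw [abs_mul, abs_of_nonneg (hz i)]
        have h5 : |1 - 1 / x i| ≤ K := by
          have h6 := hKj i
          have h3 : 0 < 1 / x i := by have := hx i; positivity
          rw [abs_le]
          constructor <;> linarith
        nlinarith [hz i]
      have hSnn : 0 ≤ ∑ j ∈ Finset.univ.erase i, z j :=
        Finset.sum_nonneg fun j _ => hz j
      have h4 := hsum_split i z
      rw [Real.norm_eq_abs]
      calc |D z - (1 - 1 / x i) * z i| ≤ |D z| + |(1 - 1 / x i) * z i| := abs_sub _ _
        _ ≤ K * ∑ j, z j + K * z i := add_le_add h1 h2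
        _ ≤ (2 * K + 1) * (z i + ∑ j ∈ Finset.univ.erase i, z j) := by
            rw [h4]; nlinarith [hz i]
    simpa only [hDeq] using this
  refine ⟨hν1, hμ1, ?_⟩
  -- the inequality
  have hνle : ∫ z, (f (x + z) - f x) ∂ν ≤ ∫ z, (∑ i, z i) ∂ν := by
    refine integral_mono_ae hν1 hνint ?_
    filter_upwards [hν] with z hz
    rw [hDeq z]; exact hUpper z hz
  have hμle : ∀ i, x i * ∫ z, (f (x + z) - f x - (1 - 1 / x i) * z i) ∂(μ i)
      ≤ x i * ∫ z, (∑ j ∈ Finset.univ.erase i, z j) ∂(μ i) + ∫ z, z i ∂(μ i) := by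
    intro i
    have hle : ∫ z, (f (x + z) - f x - (1 - 1 / x i) * z i) ∂(μ i)
        ≤ ∫ z, (z i / x i + ∑ j ∈ Finset.univ.erase i, z j) ∂(μ i) := by
      refine integral_mono_ae (hμ1 i) (((hzi i).div_const _).add (hS i)) ?_
      filter_upwards [hμ i] with z hz
      rw [hDeq z]
      have h1 := hUpper z hz
      have h2 := hsum_split i z
      have h3 : (1 - 1 / x i) * z i = z i - z i / x i := by
        ring
      linarith
    have heq : ∫ z, (z i / x i + ∑ j ∈ Finset.univ.erase i, z j) ∂(μ i)
        = (∫ z, z i ∂(μ i)) / x i + ∫ z, (∑ j ∈ Finset.univ.erase i, z j) ∂(μ i) := by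
      rw [integral_add ((hzi i).div_const _) (hS i), integral_div]
    have hxi := hx i
    have := mul_le_mul_of_nonneg_left hle hxi.le
    rw [heq] at this
    have h5 : x i * ((∫ z, z i ∂(μ i)) / x i + ∫ z, (∑ j ∈ Finset.univ.erase i, z j) ∂(μ i))
        = x i * ∫ z, (∑ j ∈ Finset.univ.erase i, z j) ∂(μ i) + ∫ z, z i ∂(μ i) := by
      have hne : x i ≠ 0 := (hx i).ne'
      rw [mul_add, mul_comm (x i) (_ / x i), div_mul_cancel₀ _ hne]
      ring
    linarith
  exact add_le_add hνle (Finset.sum_le_sum fun i _ => hμle i)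
end

section
/- Let d ≥ 1. Let η, σ ∈ ℝ^d with η_i > σ_i ≥ 0 for all i; let b = (b_{ij}) be a d×d real matrix with b_{ij} ≥ 0 for i ≠ j, and c = (c_{ij}) a d×d real matrix; set γ_i(x) = Σ_{j=1}^d c_{ij} x_i x_j. Let ν be a measure on ℝ^d concentrated on {z : z_j ≥ 0 for all j} with ν({0}) = 0 and ∫ |z| dν(z) < ∞, and for each i let μ_i be a measure on ℝ^d concentrated on {z : z_j ≥ 0 for all j} with μ_i({0}) = 0 and ∫ ( min(z_i, z_i²) + Σ_{j≠i} z_j ) dμ_i(z) < ∞. Define f on the open positive orthant by f(x) = 1 + Σ_{i=1}^d (x_i − log x_i), and for x with x_i > 0 for all i define Lf(x) = Σ_{i=1}^d (η_i + Σ_{j=1}^d b_{ij} x_j + γ_i(x))·(1 − 1/x_i) + Σ_{i=1}^d σ_i/x_i + ∫ ( f(x+z) − f(x) ) dν(z) + Σ_{i=1}^d x_i ∫ ( f(x+z) − f(x) − (1 − 1/x_i) z_i ) dμ_i(z). Then all the integrals are well defined, and for every m > 0 there exists a constant K > 0 such that Lf(x) ≤ K·f(x) for every x with 0 < x_i < m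 for all i. -/
open MeasureTheory Real BigOperators

lemma aux_log_diff_nonneg {x z : ℝ} (hx : 0 < x) (hz : 0 ≤ z) :
    0 ≤ Real.log (x + z) - Real.log x :=
  sub_nonneg.2 (Real.log_le_log hx (by linarith))

lemma aux_log_diff_le {x z : ℝ} (hx : 0 < x) (hz : 0 ≤ z) :
    Real.log (x + z) - Real.log x ≤ z / x := by
  have hxz : 0 < x + z := by linarith
  have h1 : Real.log ((x + z) / x) ≤ (x + z) / x - 1 :=
    Real.log_le_sub_one_of_pos (by positivity)
  rw [Real.log_div hxz.ne' hx.ne'] at h1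
  have : (x + z) / x - 1 = z / x := by field_simp; ring
  linarith [this ▸ h1]

lemma aux_rem_nonneg {x z : ℝ} (hx : 0 < x) (hz : 0 ≤ z) :
    0 ≤ z / x - (Real.log (x + z) - Real.log x) :=
  sub_nonneg.2 (aux_log_diff_le hx hz)

lemma aux_rem_le_sq {x z : ℝ} (hx : 0 < x) (hz : 0 ≤ z) :
    z / x - (Real.log (x + z) - Real.log x) ≤ z ^ 2 / x ^ 2 := by
  have hxz : 0 < x + z := by linarith
  have h1 : Real.log (x / (x + z)) ≤ x / (x + z) - 1 :=
    Real.log_le_sub_one_of_pos (by positivity)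
  rw [Real.log_div hx.ne' hxz.ne'] at h1
  have h2 : Real.log (x + z) - Real.log x ≥ z / (x + z) := by
    have : x / (x + z) - 1 = -(z / (x + z)) := by field_simp; ring
    linarith [this ▸ h1]
  have h3 : z / x - z / (x + z) ≤ z ^ 2 / x ^ 2 := by
    rw [div_sub_div _ _ hx.ne' hxz.ne', div_le_div_iff₀ (by positivity) (by positivity)]
    ring_nf
    nlinarith [mul_nonneg (pow_nonneg hz 3) hx.le]
  linarith

lemma aux_min_mul_le {a b u v : ℝ} (hu : 0 ≤ u) (hv : 0 ≤ v) :
    min (a * u) (b * v) ≤ max a b * min u v := by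
  rcases le_total u v with h | h
  · rw [min_eq_left h]
    calc min (a * u) (b * v) ≤ a * u := min_le_left _ _
    _ ≤ max a b * u := by gcongr; exact le_max_left _ _
  · rw [min_eq_right h]
    calc min (a * u) (b * v) ≤ b * v := min_le_right _ _
    _ ≤ max a b * v := by gcongr; exact le_max_right _ _

lemma aux_split (B S sg et xq : ℝ) (hx : xq ≠ 0) :
    (et + B + xq * S) * (1 - 1 / xq) + sg / xq
      = (et + B + xq * S) - B / xq - S + (sg - et) / xq := by
  field_simp; ring

lemma euclid_abs_le_norm {d : ℕ} (z : EuclideanSpace ℝ (Fin d)) (i : Fin d) : |z i| ≤ ‖z‖ := by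
  rw [EuclideanSpace.norm_eq]
  calc |z i| = Real.sqrt (|z i| ^ 2) := (Real.sqrt_sq (abs_nonneg _)).symm
  _ ≤ _ := by
      apply Real.sqrt_le_sqrt
      calc |z i| ^ 2 = ‖z i‖ ^ 2 := rfl
      _ ≤ _ := Finset.single_le_sum (f := fun j => ‖z j‖ ^ 2)
            (fun j _ => by positivity) (Finset.mem_univ i)

set_option maxHeartbeats 2000000 in
/-- Foster–Lyapunov inequality `Lf ≤ K·f` on `(0,m)^d` for the generator of a
CIMBI process applied to `f(x) = 1 + Σᵢ (xᵢ − log xᵢ)`, in the supercritical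
immigration case `ηᵢ > σᵢ`. -/
theorem cimbi_foster_lyapunov_supercritical
    (d : ℕ) (hd : 1 ≤ d)
    (η σ : Fin d → ℝ) (hησ : ∀ i, 0 ≤ σ i ∧ σ i < η i)
    (b c : Matrix (Fin d) (Fin d) ℝ)
    (hb : ∀ i j, i ≠ j → 0 ≤ b i j)
    (γ : EuclideanSpace ℝ (Fin d) → Fin d → ℝ)
    (hγ : ∀ (x : EuclideanSpace ℝ (Fin d)) (i : Fin d),
      γ x i = ∑ j, c i j * x i * x j)
    (ν : Measure (EuclideanSpace ℝ (Fin d)))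
    (hν : ∀ᵐ z ∂ν, ∀ j, 0 ≤ z j)
    (hν0 : ν ({0} : Set (EuclideanSpace ℝ (Fin d))) = 0)
    (hνint : Integrable (fun z => ‖z‖) ν)
    (μ : Fin d → Measure (EuclideanSpace ℝ (Fin d)))
    (hμ : ∀ i, ∀ᵐ z ∂(μ i), ∀ j, 0 ≤ z j)
    (hμ0 : ∀ i, μ i ({0} : Set (EuclideanSpace ℝ (Fin d))) = 0)
    (hμint : ∀ i, Integrable
      (fun z => min (z i) ((z i) ^ 2) + ∑ j ∈ Finset.univ.erase i, z j) (μ i))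
    (f : EuclideanSpace ℝ (Fin d) → ℝ)
    (hf : ∀ x : EuclideanSpace ℝ (Fin d), f x = 1 + ∑ i, (x i - Real.log (x i)))
    (Lf : EuclideanSpace ℝ (Fin d) → ℝ)
    (hLf : ∀ x : EuclideanSpace ℝ (Fin d), (∀ i, 0 < x i) →
      Lf x = ∑ i, (η i + (∑ j, b i j * x j) + γ x i) * (1 - 1 / x i)
        + ∑ i, σ i / x i
        + ∫ z, (f (x + z) - f x) ∂ν
        + ∑ i, x i * ∫ z, (f (x + z) - f x - (1 - 1 / x i) * z i) ∂(μ i)) :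
    (∀ x : EuclideanSpace ℝ (Fin d), (∀ i, 0 < x i) →
      Integrable (fun z => f (x + z) - f x) ν ∧
      ∀ i, Integrable (fun z => f (x + z) - f x - (1 - 1 / x i) * z i) (μ i)) ∧
    ∀ m > (0 : ℝ), ∃ K > (0 : ℝ), ∀ x : EuclideanSpace ℝ (Fin d),
      (∀ i, 0 < x i ∧ x i < m) → Lf x ≤ K * f x := by
  classical
  have hcoord : ∀ i : Fin d, Measurable fun z : EuclideanSpace ℝ (Fin d) => z i := fun i => (measurable_pi_apply i).comp (WithLp.measurable_ofLp 2 _)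
  -- rewriting the ν-integrand
  have hrwν : ∀ x : EuclideanSpace ℝ (Fin d), (fun z : EuclideanSpace ℝ (Fin d) => f (x + z) - f x)
      = fun z : EuclideanSpace ℝ (Fin d) => ∑ j, (z j - (Real.log (x j + z j) - Real.log (x j))) := by
    intro x; funext z
    rw [hf (x + z), hf x]
    simp only [PiLp.add_apply]
    have h := Finset.sum_sub_distrib (s := Finset.univ)
      (f := fun j : Fin d => (x j + z j) - Real.log (x j + z j))
      (g := fun j : Fin d => x j - Real.log (x j))
    have h2 : ∑ j, ((x j + z j) - Real.log (x j + z j) - (x j - Real.log (x j)))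
        = ∑ j, (z j - (Real.log (x j + z j) - Real.log (x j))) :=
      Finset.sum_congr rfl fun j _ => by ring
    linarith [h, h2]
  -- rewriting the μ-integrands
  have hrwμ : ∀ (x : EuclideanSpace ℝ (Fin d)) (i : Fin d), (fun z : EuclideanSpace ℝ (Fin d) => f (x + z) - f x - (1 - 1 / x i) * z i)
      = fun z : EuclideanSpace ℝ (Fin d) => (z i / x i - (Real.log (x i + z i) - Real.log (x i)))
          + ∑ j ∈ Finset.univ.erase i, (z j - (Real.log (x j + z j) - Real.log (x j))) := by
    intro x i; funext z
    have h0 : f (x + z) - f x = ∑ j, (z j - (Real.log (x j + z j) - Real.log (x j))) :=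
      congrFun (hrwν x) z
    rw [h0, ← Finset.add_sum_erase _ _ (Finset.mem_univ i)]
    ring
  -- measurability of the ν-integrand
  have hgνmeas : ∀ x : EuclideanSpace ℝ (Fin d),
      Measurable (fun z : EuclideanSpace ℝ (Fin d) => ∑ j, (z j - (Real.log (x j + z j) - Real.log (x j)))) :=
    fun x => Finset.measurable_sum _ fun j _ => (hcoord j).sub
      ((Real.measurable_log.comp (measurable_const.add (hcoord j))).sub measurable_const)
  -- integrability of the ν-integrand
  have hintν : ∀ x : EuclideanSpace ℝ (Fin d), (∀ i, 0 < x i) →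
      Integrable (fun z : EuclideanSpace ℝ (Fin d) => ∑ j, (z j - (Real.log (x j + z j) - Real.log (x j)))) ν := by
    intro x hx
    refine (hνint.const_mul (∑ j, (1 + (x j)⁻¹))).mono' (hgνmeas x).aestronglyMeasurable ?_
    filter_upwards [hν] with z hz
    calc ‖∑ j, (z j - (Real.log (x j + z j) - Real.log (x j)))‖
        ≤ ∑ j, |z j - (Real.log (x j + z j) - Real.log (x j))| :=
          Finset.abs_sum_le_sum_abs _ _
    _ ≤ ∑ j, (1 + (x j)⁻¹) * ‖z‖ := by
        refine Finset.sum_le_sum fun j _ => ?_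
        have hΔ0 := aux_log_diff_nonneg (hx j) (hz j)
        have hΔle := aux_log_diff_le (hx j) (hz j)
        have hzn : z j ≤ ‖z‖ := le_trans (le_abs_self _) (euclid_abs_le_norm z j)
        have hinv : (0:ℝ) ≤ (x j)⁻¹ := inv_nonneg.2 (hx j).le
        have hn0 : (0:ℝ) ≤ ‖z‖ := norm_nonneg _
        have hq : z j / x j ≤ ‖z‖ * (x j)⁻¹ := by
          rw [div_eq_mul_inv]; exact mul_le_mul_of_nonneg_right hzn hinv
        have hexp : (1 + (x j)⁻¹) * ‖z‖ = ‖z‖ + ‖z‖ * (x j)⁻¹ := by ring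
        rw [abs_le]
        constructor <;> [linarith [hz j]; linarith [hz j]]
    _ = (∑ j, (1 + (x j)⁻¹)) * ‖z‖ := (Finset.sum_mul _ _ _).symm
  -- integrability of the μ-integrands
  have hintμ : ∀ x : EuclideanSpace ℝ (Fin d), (∀ i, 0 < x i) → ∀ i : Fin d,
      Integrable (fun z : EuclideanSpace ℝ (Fin d) => (z i / x i - (Real.log (x i + z i) - Real.log (x i)))
        + ∑ j ∈ Finset.univ.erase i, (z j - (Real.log (x j + z j) - Real.log (x j)))) (μ i) := by
    intro x hx i
    set M : ℝ := max (x i)⁻¹ (((x i) ^ 2)⁻¹) with hM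
    set S : ℝ := ∑ j, (1 + (x j)⁻¹) with hS
    have hM0 : 0 ≤ M := le_trans (inv_nonneg.2 (hx i).le) (le_max_left _ _)
    have hS0 : 0 ≤ S := Finset.sum_nonneg fun j _ => by
      have := inv_nonneg.2 (hx j).le; linarith
    have hmeas : Measurable (fun z : EuclideanSpace ℝ (Fin d) =>
        (z i / x i - (Real.log (x i + z i) - Real.log (x i)))
        + ∑ j ∈ Finset.univ.erase i, (z j - (Real.log (x j + z j) - Real.log (x j)))) := by
      refine Measurable.add ?_ ?_
      · exact ((hcoord i).div_const _).sub
          ((Real.measurable_log.comp (measurable_const.add (hcoord i))).sub measurable_const)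
      · exact Finset.measurable_sum _ fun j _ => (hcoord j).sub
          ((Real.measurable_log.comp (measurable_const.add (hcoord j))).sub measurable_const)
    refine ((hμint i).const_mul (M + S)).mono' hmeas.aestronglyMeasurable ?_
    filter_upwards [hμ i] with z hz
    have ha0 := aux_rem_nonneg (hx i) (hz i)
    have ha1 : z i / x i - (Real.log (x i + z i) - Real.log (x i)) ≤ M * min (z i) ((z i) ^ 2) := by
      have h1 : z i / x i - (Real.log (x i + z i) - Real.log (x i)) ≤ (x i)⁻¹ * z i := by
        have := aux_log_diff_nonneg (hx i) (hz i)
        rw [inv_mul_eq_div]; linarith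
      have h2 : z i / x i - (Real.log (x i + z i) - Real.log (x i))
          ≤ ((x i) ^ 2)⁻¹ * (z i) ^ 2 := by
        have := aux_rem_le_sq (hx i) (hz i)
        rw [inv_mul_eq_div]; linarith
      exact le_trans (le_min h1 h2) (aux_min_mul_le (hz i) (sq_nonneg _))
    have hsumabs : |∑ j ∈ Finset.univ.erase i, (z j - (Real.log (x j + z j) - Real.log (x j)))|
        ≤ S * ∑ j ∈ Finset.univ.erase i, z j := by
      calc |∑ j ∈ Finset.univ.erase i, (z j - (Real.log (x j + z j) - Real.log (x j)))|
          ≤ ∑ j ∈ Finset.univ.erase i, |z j - (Real.log (x j + z j) - Real.log (x j))| :=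
            Finset.abs_sum_le_sum_abs _ _
      _ ≤ ∑ j ∈ Finset.univ.erase i, S * z j := by
          refine Finset.sum_le_sum fun j _ => ?_
          have hΔ0 := aux_log_diff_nonneg (hx j) (hz j)
          have hΔle := aux_log_diff_le (hx j) (hz j)
          have hinv : (0:ℝ) ≤ (x j)⁻¹ := inv_nonneg.2 (hx j).le
          have hSj : 1 + (x j)⁻¹ ≤ S :=
            Finset.single_le_sum (f := fun j => 1 + (x j)⁻¹)
              (fun j _ => by have := inv_nonneg.2 (hx j).le; linarith) (Finset.mem_univ j)
          have hq : z j / x j = z j * (x j)⁻¹ := div_eq_mul_inv _ _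
          have hmul : z j * (x j)⁻¹ ≤ z j * S := by
            have : (x j)⁻¹ ≤ S := by linarith
            exact mul_le_mul_of_nonneg_left this (hz j)
          rw [abs_le]
          constructor
          · nlinarith [hz j, mul_nonneg (hz j) hS0]
          · nlinarith [hz j, mul_nonneg (hz j) hS0]
      _ = S * ∑ j ∈ Finset.univ.erase i, z j := (Finset.mul_sum _ _ _).symm
    have hmin0 : 0 ≤ min (z i) ((z i) ^ 2) := le_min (hz i) (sq_nonneg _)
    have hsz0 : 0 ≤ ∑ j ∈ Finset.univ.erase i, z j := Finset.sum_nonneg fun j _ => hz j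
    have habs : ‖(z i / x i - (Real.log (x i + z i) - Real.log (x i)))
        + ∑ j ∈ Finset.univ.erase i, (z j - (Real.log (x j + z j) - Real.log (x j)))‖
        ≤ (z i / x i - (Real.log (x i + z i) - Real.log (x i)))
          + |∑ j ∈ Finset.univ.erase i, (z j - (Real.log (x j + z j) - Real.log (x j)))| := by
      rw [Real.norm_eq_abs]
      calc _ ≤ |z i / x i - (Real.log (x i + z i) - Real.log (x i))| + _ := abs_add_le _ _
      _ ≤ _ := by rw [abs_of_nonneg ha0]
    have hexp : (M + S) * (min (z i) ((z i) ^ 2) + ∑ j ∈ Finset.univ.erase i, z j)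
        = M * min (z i) ((z i) ^ 2) + S * (∑ j ∈ Finset.univ.erase i, z j)
          + (M * (∑ j ∈ Finset.univ.erase i, z j) + S * min (z i) ((z i) ^ 2)) := by ring
    have h1 : 0 ≤ M * (∑ j ∈ Finset.univ.erase i, z j) := mul_nonneg hM0 hsz0
    have h2 : 0 ≤ S * min (z i) ((z i) ^ 2) := mul_nonneg hS0 hmin0
    linarith
  refine ⟨fun x hx => ⟨by rw [hrwν x]; exact hintν x hx,
    fun i => by rw [hrwμ x i]; exact hintμ x hx i⟩, ?_⟩
  -- Part 2
  have hA0 : ∀ i : Fin d,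
      0 ≤ ∫ z, (min (z i) ((z i) ^ 2) + ∑ j ∈ Finset.univ.erase i, z j) ∂(μ i) := by
    intro i
    refine integral_nonneg_of_ae ((hμ i).mono fun z hz => ?_)
    exact add_nonneg (le_min (hz i) (sq_nonneg _)) (Finset.sum_nonneg fun j _ => hz j)
  have hBint : ∀ i : Fin d,
      Integrable (fun z : EuclideanSpace ℝ (Fin d) => ∑ j ∈ Finset.univ.erase i, z j) (μ i) := by
    intro i
    refine (hμint i).mono' (Finset.measurable_sum _ fun j _ => hcoord j).aestronglyMeasurable ?_
    filter_upwards [hμ i] with z hz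
    have h0 : 0 ≤ ∑ j ∈ Finset.univ.erase i, z j := Finset.sum_nonneg fun j _ => hz j
    rw [Real.norm_eq_abs, abs_of_nonneg h0]
    exact le_add_of_nonneg_left (le_min (hz i) (sq_nonneg _))
  have hB0 : ∀ i : Fin d,
      0 ≤ ∫ z, (∑ j ∈ Finset.univ.erase i, z j) ∂(μ i) := by
    intro i
    exact integral_nonneg_of_ae ((hμ i).mono fun z hz => Finset.sum_nonneg fun j _ => hz j)
  have hBle : ∀ i : Fin d,
      (∫ z, (∑ j ∈ Finset.univ.erase i, z j) ∂(μ i))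
        ≤ ∫ z, (min (z i) ((z i) ^ 2) + ∑ j ∈ Finset.univ.erase i, z j) ∂(μ i) := by
    intro i
    refine integral_mono_ae (hBint i) (hμint i) ((hμ i).mono fun z hz => ?_)
    exact le_add_of_nonneg_left (le_min (hz i) (sq_nonneg _))
  have hminint : ∀ (i : Fin d) (t : ℝ), 0 < t →
      Integrable (fun z : EuclideanSpace ℝ (Fin d) => min (t * z i) ((z i) ^ 2)) (μ i) := by
    intro i t ht
    have hmeas : Measurable fun z : EuclideanSpace ℝ (Fin d) => min (t * z i) ((z i) ^ 2) :=
      ((hcoord i).const_mul t).min ((hcoord i).pow_const 2)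
    refine ((hμint i).const_mul (max t 1)).mono' hmeas.aestronglyMeasurable ?_
    filter_upwards [hμ i] with z hz
    have h1 : 0 ≤ min (t * z i) ((z i) ^ 2) := le_min (mul_nonneg ht.le (hz i)) (sq_nonneg _)
    have h2 : min (t * z i) ((z i) ^ 2) ≤ max t 1 * min (z i) ((z i) ^ 2) := by
      have h := aux_min_mul_le (a := t) (b := 1) (hz i) (sq_nonneg (z i))
      rw [one_mul] at h; exact h
    have h3 : 0 ≤ ∑ j ∈ Finset.univ.erase i, z j := Finset.sum_nonneg fun j _ => hz j
    have hmax : (0:ℝ) ≤ max t 1 := le_trans zero_le_one (le_max_right _ _)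
    have hexp : max t 1 * (min (z i) ((z i) ^ 2) + ∑ j ∈ Finset.univ.erase i, z j)
        = max t 1 * min (z i) ((z i) ^ 2) + max t 1 * ∑ j ∈ Finset.univ.erase i, z j := by ring
    rw [Real.norm_eq_abs, abs_of_nonneg h1]
    nlinarith [mul_nonneg hmax h3]
  have hFle : ∀ (i : Fin d) (t : ℝ), 0 < t →
      (∫ z, min (t * z i) ((z i) ^ 2) ∂(μ i))
        ≤ max t 1 * ∫ z, (min (z i) ((z i) ^ 2) + ∑ j ∈ Finset.univ.erase i, z j) ∂(μ i) := by
    intro i t ht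
    refine le_trans (integral_mono_ae (hminint i t ht) ((hμint i).const_mul _) ?_)
      (le_of_eq (integral_const_mul _ _))
    filter_upwards [hμ i] with z hz
    have h2 : min (t * z i) ((z i) ^ 2) ≤ max t 1 * min (z i) ((z i) ^ 2) := by
      have h := aux_min_mul_le (a := t) (b := 1) (hz i) (sq_nonneg (z i))
      rw [one_mul] at h; exact h
    have h3 : 0 ≤ ∑ j ∈ Finset.univ.erase i, z j := Finset.sum_nonneg fun j _ => hz j
    have hmax : (0:ℝ) ≤ max t 1 := le_trans zero_le_one (le_max_right _ _)
    have hexp : max t 1 * (min (z i) ((z i) ^ 2) + ∑ j ∈ Finset.univ.erase i, z j)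
        = max t 1 * min (z i) ((z i) ^ 2) + max t 1 * ∑ j ∈ Finset.univ.erase i, z j := by ring
    nlinarith [mul_nonneg hmax h3]
  -- dominated convergence: the key smallness
  have key : ∀ i : Fin d, ∃ e : ℝ, 0 < e ∧ ∀ t : ℝ, 0 < t → t ≤ 1 → t < e →
      (∫ z, min (t * z i) ((z i) ^ 2) ∂(μ i)) ≤ η i - σ i := by
    intro i
    have hdel : 0 < η i - σ i := sub_pos.2 (hησ i).2
    have htend : Filter.Tendsto (fun t : ℝ => ∫ z, min (t * z i) ((z i) ^ 2) ∂(μ i))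
        (nhdsWithin 0 (Set.Ioc (0:ℝ) 1)) (nhds 0) := by
      have htend0 : Filter.Tendsto (fun t : ℝ => ∫ z, min (t * z i) ((z i) ^ 2) ∂(μ i))
          (nhdsWithin 0 (Set.Ioc (0:ℝ) 1))
          (nhds (∫ (_ : EuclideanSpace ℝ (Fin d)), (0:ℝ) ∂(μ i))) := by
        refine MeasureTheory.tendsto_integral_filter_of_dominated_convergence
          (fun z => min (z i) ((z i) ^ 2) + ∑ j ∈ Finset.univ.erase i, z j) ?_ ?_ (hμint i) ?_
        · exact Filter.Eventually.of_forall fun t =>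
            (((hcoord i).const_mul t).min ((hcoord i).pow_const 2)).aestronglyMeasurable
        · filter_upwards [self_mem_nhdsWithin] with t ht
          filter_upwards [hμ i] with z hz
          have h1 : 0 ≤ min (t * z i) ((z i) ^ 2) :=
            le_min (mul_nonneg ht.1.le (hz i)) (sq_nonneg _)
          have h2 : t * z i ≤ z i := by nlinarith [hz i, ht.2, ht.1.le]
          have h3 : min (t * z i) ((z i) ^ 2) ≤ min (z i) ((z i) ^ 2) := min_le_min h2 le_rfl
          have h4 : 0 ≤ ∑ j ∈ Finset.univ.erase i, z j := Finset.sum_nonneg fun j _ => hz j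
          rw [Real.norm_eq_abs, abs_of_nonneg h1]
          linarith
        · filter_upwards [hμ i] with z hz
          apply squeeze_zero'
          · filter_upwards [self_mem_nhdsWithin] with t ht
            exact le_min (mul_nonneg ht.1.le (hz i)) (sq_nonneg _)
          · exact Filter.Eventually.of_forall fun t => min_le_left _ _
          · have hcont : Filter.Tendsto (fun t : ℝ => t * z i) (nhds 0) (nhds 0) := by
              simpa using (continuous_mul_right (z i)).tendsto (0:ℝ)
            exact hcont.mono_left nhdsWithin_le_nhds
      simpa using htend0
    have hev := htend.eventually (gt_mem_nhds hdel)
    rw [eventually_nhdsWithin_iff, Metric.eventually_nhds_iff] at hev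
    obtain ⟨e, he0, he⟩ := hev
    refine ⟨e, he0, fun t ht0 ht1 hte => le_of_lt (he ?_ ⟨ht0, ht1⟩)⟩
    rw [Real.dist_eq, sub_zero, abs_of_pos ht0]; exact hte
  choose ε hε0 hεkey using key
  have hf1 : ∀ x : EuclideanSpace ℝ (Fin d), (∀ i, 0 < x i) → 1 ≤ f x := by
    intro x hx; rw [hf x]
    have h0 : 0 ≤ ∑ i, (x i - Real.log (x i)) := Finset.sum_nonneg fun i _ => by
      have := Real.log_le_sub_one_of_pos (hx i); linarith
    linarith
  intro m hm
  refine ⟨max ((∑ i, ((η i + m * (∑ j, |b i j|) + m ^ 2 * (∑ j, |c i j|)) + |b i i|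
      + m * (∑ j, |c i j|)
      + m * (∫ z, (min (z i) ((z i) ^ 2) + ∑ j ∈ Finset.univ.erase i, z j) ∂(μ i))
      + max m 1 * (∫ z, (min (z i) ((z i) ^ 2) + ∑ j ∈ Finset.univ.erase i, z j) ∂(μ i))
        / min (ε i) 1))
      + d * ∫ z, ‖z‖ ∂ν) 1, lt_of_lt_of_le one_pos (le_max_right _ _), ?_⟩
  intro x hx
  have hx1 : ∀ i, 0 < x i := fun i => (hx i).1
  rw [hLf x hx1, hrwν x]
  simp only [hγ, hrwμ]
  have hper : ∀ i : Fin d,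
      (η i + (∑ j, b i j * x j) + ∑ j, c i j * x i * x j) * (1 - 1 / x i) + σ i / x i
        + x i * ∫ z, ((z i / x i - (Real.log (x i + z i) - Real.log (x i)))
            + ∑ j ∈ Finset.univ.erase i, (z j - (Real.log (x j + z j) - Real.log (x j)))) ∂(μ i)
      ≤ (η i + m * (∑ j, |b i j|) + m ^ 2 * (∑ j, |c i j|)) + |b i i| + m * (∑ j, |c i j|)
        + m * (∫ z, (min (z i) ((z i) ^ 2) + ∑ j ∈ Finset.univ.erase i, z j) ∂(μ i))
        + max m 1 * (∫ z, (min (z i) ((z i) ^ 2) + ∑ j ∈ Finset.univ.erase i, z j) ∂(μ i))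
          / min (ε i) 1 := by
    intro i
    have hx0 := hx1 i
    have hxm := (hx i).2
    have hJle : (∫ z, ((z i / x i - (Real.log (x i + z i) - Real.log (x i)))
          + ∑ j ∈ Finset.univ.erase i, (z j - (Real.log (x j + z j) - Real.log (x j)))) ∂(μ i))
        ≤ ((x i) ^ 2)⁻¹ * (∫ z, min (x i * z i) ((z i) ^ 2) ∂(μ i))
          + ∫ z, (∑ j ∈ Finset.univ.erase i, z j) ∂(μ i) := by
      have hrhs : Integrable (fun z : EuclideanSpace ℝ (Fin d) =>
          ((x i) ^ 2)⁻¹ * min (x i * z i) ((z i) ^ 2)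
          + ∑ j ∈ Finset.univ.erase i, z j) (μ i) :=
        ((hminint i (x i) hx0).const_mul _).add (hBint i)
      refine le_trans (integral_mono_ae (hintμ x hx1 i) hrhs ?_) (le_of_eq ?_)
      · filter_upwards [hμ i] with z hz
        have e1 : ((x i) ^ 2)⁻¹ * (x i * z i) = z i / x i := by field_simp
        have e2 : ((x i) ^ 2)⁻¹ * ((z i) ^ 2) = (z i) ^ 2 / (x i) ^ 2 := by field_simp
        have hid : ((x i) ^ 2)⁻¹ * min (x i * z i) ((z i) ^ 2)
            = min (((x i) ^ 2)⁻¹ * (x i * z i)) (((x i) ^ 2)⁻¹ * ((z i) ^ 2)) := by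
          rcases le_total (x i * z i) ((z i) ^ 2) with h | h
          · rw [min_eq_left h,
              min_eq_left (mul_le_mul_of_nonneg_left h (inv_nonneg.2 (sq_nonneg (x i))))]
          · rw [min_eq_right h,
              min_eq_right (mul_le_mul_of_nonneg_left h (inv_nonneg.2 (sq_nonneg (x i))))]
        have h1 : z i / x i - (Real.log (x i + z i) - Real.log (x i))
            ≤ ((x i) ^ 2)⁻¹ * min (x i * z i) ((z i) ^ 2) := by
          rw [hid, e1, e2]
          exact le_min (by linarith [aux_log_diff_nonneg hx0 (hz i)])
            (aux_rem_le_sq hx0 (hz i))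
        have h2 : (∑ j ∈ Finset.univ.erase i, (z j - (Real.log (x j + z j) - Real.log (x j))))
            ≤ ∑ j ∈ Finset.univ.erase i, z j :=
          Finset.sum_le_sum fun j _ => by linarith [aux_log_diff_nonneg (hx1 j) (hz j)]
        exact add_le_add h1 h2
      · rw [integral_add ((hminint i (x i) hx0).const_mul _) (hBint i), integral_const_mul]
    have hterm : x i * (∫ z, ((z i / x i - (Real.log (x i + z i) - Real.log (x i)))
          + ∑ j ∈ Finset.univ.erase i, (z j - (Real.log (x j + z j) - Real.log (x j)))) ∂(μ i))
        ≤ (∫ z, min (x i * z i) ((z i) ^ 2) ∂(μ i)) / x i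
          + m * ∫ z, (min (z i) ((z i) ^ 2) + ∑ j ∈ Finset.univ.erase i, z j) ∂(μ i) := by
      have h1 := mul_le_mul_of_nonneg_left hJle hx0.le
      have h2 : x i * (((x i) ^ 2)⁻¹ * (∫ z, min (x i * z i) ((z i) ^ 2) ∂(μ i))
            + ∫ z, (∑ j ∈ Finset.univ.erase i, z j) ∂(μ i))
          = (∫ z, min (x i * z i) ((z i) ^ 2) ∂(μ i)) / x i
            + x i * ∫ z, (∑ j ∈ Finset.univ.erase i, z j) ∂(μ i) := by
        field_simp
      have h3 : x i * (∫ z, (∑ j ∈ Finset.univ.erase i, z j) ∂(μ i))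
          ≤ m * ∫ z, (min (z i) ((z i) ^ 2) + ∑ j ∈ Finset.univ.erase i, z j) ∂(μ i) :=
        mul_le_mul hxm.le (hBle i) (hB0 i) (le_of_lt hm)
      linarith
    have hc : (∫ z, min (x i * z i) ((z i) ^ 2) ∂(μ i)) / x i + (σ i - η i) / x i
        ≤ max m 1 * (∫ z, (min (z i) ((z i) ^ 2) + ∑ j ∈ Finset.univ.erase i, z j) ∂(μ i))
          / min (ε i) 1 := by
      have ht0 : (0:ℝ) < min (ε i) 1 := lt_min (hε0 i) one_pos
      have hRHS0 : 0 ≤ max m 1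
          * (∫ z, (min (z i) ((z i) ^ 2) + ∑ j ∈ Finset.univ.erase i, z j) ∂(μ i))
          / min (ε i) 1 :=
        div_nonneg (mul_nonneg (le_trans zero_le_one (le_max_right m 1)) (hA0 i)) ht0.le
      by_cases hcase : x i < min (ε i) 1
      · have hFb := hεkey i (x i) hx0 (le_of_lt (lt_of_lt_of_le hcase (min_le_right _ _)))
          (lt_of_lt_of_le hcase (min_le_left _ _))
        have hnum : (∫ z, min (x i * z i) ((z i) ^ 2) ∂(μ i)) + (σ i - η i) ≤ 0 := by linarith
        have hle0 : ((∫ z, min (x i * z i) ((z i) ^ 2) ∂(μ i)) + (σ i - η i)) / x i ≤ 0 := by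
          rw [div_nonpos_iff]; exact Or.inr ⟨hnum, hx0.le⟩
        rw [← add_div]
        linarith
      · push_neg at hcase
        have h1 : (∫ z, min (x i * z i) ((z i) ^ 2) ∂(μ i))
            ≤ max m 1 * ∫ z, (min (z i) ((z i) ^ 2) + ∑ j ∈ Finset.univ.erase i, z j) ∂(μ i) :=
          le_trans (hFle i (x i) hx0)
            (mul_le_mul_of_nonneg_right (max_le_max hxm.le le_rfl) (hA0 i))
        have h2 : (∫ z, min (x i * z i) ((z i) ^ 2) ∂(μ i)) / x i
            ≤ max m 1 * (∫ z, (min (z i) ((z i) ^ 2) + ∑ j ∈ Finset.univ.erase i, z j) ∂(μ i))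
              / min (ε i) 1 :=
          div_le_div₀ (mul_nonneg (le_trans zero_le_one (le_max_right m 1)) (hA0 i)) h1 ht0 hcase
        have h3 : (σ i - η i) / x i ≤ 0 := by
          rw [div_nonpos_iff]; exact Or.inr ⟨by linarith [(hησ i).2], hx0.le⟩
        linarith
    have hGam : (∑ j, c i j * x i * x j) = x i * (∑ j, c i j * x j) := by
      rw [Finset.mul_sum]; exact Finset.sum_congr rfl fun j _ => by ring
    have hsplit : (η i + (∑ j, b i j * x j) + ∑ j, c i j * x i * x j) * (1 - 1 / x i) + σ i / x i
        = (η i + (∑ j, b i j * x j) + ∑ j, c i j * x i * x j) - (∑ j, b i j * x j) / x i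
          - (∑ j, c i j * x j) + (σ i - η i) / x i := by
      rw [hGam]
      exact aux_split _ _ _ _ _ (ne_of_gt hx0)
    have h1 : η i + (∑ j, b i j * x j) + (∑ j, c i j * x i * x j)
        ≤ η i + m * (∑ j, |b i j|) + m ^ 2 * (∑ j, |c i j|) := by
      have hbsum : (∑ j, b i j * x j) ≤ ∑ j, m * |b i j| := Finset.sum_le_sum fun j _ => by
        nlinarith [le_abs_self (b i j), abs_nonneg (b i j), (hx1 j), (hx j).2]
      have hcsum : (∑ j, c i j * x i * x j) ≤ ∑ j, m ^ 2 * |c i j| :=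
        Finset.sum_le_sum fun j _ => by
          have hxx : x i * x j ≤ m ^ 2 := by nlinarith [hx0, hx1 j, hxm, (hx j).2]
          have p0 : 0 ≤ x i * x j := mul_nonneg hx0.le (hx1 j).le
          nlinarith [mul_nonneg (sub_nonneg.2 (le_abs_self (c i j))) p0,
            mul_nonneg (abs_nonneg (c i j)) (sub_nonneg.2 hxx)]
      have e1 : (∑ j, m * |b i j|) = m * ∑ j, |b i j| := (Finset.mul_sum _ _ _).symm
      have e2 : (∑ j, m ^ 2 * |c i j|) = m ^ 2 * ∑ j, |c i j| := (Finset.mul_sum _ _ _).symm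
      linarith
    have h2 : -((∑ j, b i j * x j) / x i) ≤ |b i i| := by
      have hsum2 : b i i * x i ≤ ∑ j, b i j * x j := by
        rw [← Finset.add_sum_erase _ _ (Finset.mem_univ i)]
        exact le_add_of_nonneg_right (Finset.sum_nonneg fun j hj =>
          mul_nonneg (hb i j (Ne.symm (Finset.mem_erase.1 hj).1)) (hx1 j).le)
      have hdiv := (le_div_iff₀ hx0).2 hsum2
      linarith [neg_abs_le (b i i)]
    have h3 : -(∑ j, c i j * x j) ≤ m * (∑ j, |c i j|) := by
      have hstep : (∑ j, -(c i j * x j)) ≤ ∑ j, m * |c i j| := Finset.sum_le_sum fun j _ => by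
        nlinarith [neg_abs_le (c i j), abs_nonneg (c i j), hx1 j, (hx j).2]
      have e1 : (∑ j, -(c i j * x j)) = -(∑ j, c i j * x j) := Finset.sum_neg_distrib _
      have e2 : (∑ j, m * |c i j|) = m * ∑ j, |c i j| := (Finset.mul_sum _ _ _).symm
      linarith
    linarith [hsplit, h1, h2, h3, hterm, hc]
  have hS3 : (∫ z, (∑ j, (z j - (Real.log (x j + z j) - Real.log (x j)))) ∂ν)
      ≤ d * ∫ z, ‖z‖ ∂ν := by
    refine le_trans (integral_mono_ae (hintν x hx1) (hνint.const_mul _) ?_)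
      (le_of_eq (integral_const_mul _ _))
    filter_upwards [hν] with z hz
    calc (∑ j, (z j - (Real.log (x j + z j) - Real.log (x j)))) ≤ ∑ j, z j :=
        Finset.sum_le_sum fun j _ => by linarith [aux_log_diff_nonneg (hx1 j) (hz j)]
    _ ≤ ∑ _j : Fin d, ‖z‖ :=
        Finset.sum_le_sum fun j _ => le_trans (le_abs_self _) (euclid_abs_le_norm z j)
    _ = d * ‖z‖ := by simp [Finset.sum_const, Finset.card_univ, nsmul_eq_mul]
  have hEq : (∑ i, ((η i + (∑ j, b i j * x j) + ∑ j, c i j * x i * x j) * (1 - 1 / x i)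
        + σ i / x i
        + x i * ∫ z, ((z i / x i - (Real.log (x i + z i) - Real.log (x i)))
            + ∑ j ∈ Finset.univ.erase i, (z j - (Real.log (x j + z j) - Real.log (x j)))) ∂(μ i)))
      = (∑ i, (η i + (∑ j, b i j * x j) + ∑ j, c i j * x i * x j) * (1 - 1 / x i))
        + (∑ i, σ i / x i)
        + (∑ i, x i * ∫ z, ((z i / x i - (Real.log (x i + z i) - Real.log (x i)))
            + ∑ j ∈ Finset.univ.erase i, (z j - (Real.log (x j + z j) - Real.log (x j)))) ∂(μ i)) := by
    rw [Finset.sum_add_distrib, Finset.sum_add_distrib]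
  have hsum_all := Finset.sum_le_sum fun i (_ : i ∈ Finset.univ) => hper i
  have hfx := hf1 x hx1
  have hK1 : max ((∑ i, ((η i + m * (∑ j, |b i j|) + m ^ 2 * (∑ j, |c i j|)) + |b i i|
        + m * (∑ j, |c i j|)
        + m * (∫ z, (min (z i) ((z i) ^ 2) + ∑ j ∈ Finset.univ.erase i, z j) ∂(μ i))
        + max m 1 * (∫ z, (min (z i) ((z i) ^ 2) + ∑ j ∈ Finset.univ.erase i, z j) ∂(μ i))
          / min (ε i) 1))
        + d * ∫ z, ‖z‖ ∂ν) 1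
      ≤ max ((∑ i, ((η i + m * (∑ j, |b i j|) + m ^ 2 * (∑ j, |c i j|)) + |b i i|
        + m * (∑ j, |c i j|)
        + m * (∫ z, (min (z i) ((z i) ^ 2) + ∑ j ∈ Finset.univ.erase i, z j) ∂(μ i))
        + max m 1 * (∫ z, (min (z i) ((z i) ^ 2) + ∑ j ∈ Finset.univ.erase i, z j) ∂(μ i))
          / min (ε i) 1))
        + d * ∫ z, ‖z‖ ∂ν) 1 * f x :=
    le_mul_of_one_le_right (le_trans zero_le_one (le_max_right _ _)) hfx
  have hKb := le_max_left ((∑ i, ((η i + m * (∑ j, |b i j|) + m ^ 2 * (∑ j, |c i j|)) + |b i i|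
        + m * (∑ j, |c i j|)
        + m * (∫ z, (min (z i) ((z i) ^ 2) + ∑ j ∈ Finset.univ.erase i, z j) ∂(μ i))
        + max m 1 * (∫ z, (min (z i) ((z i) ^ 2) + ∑ j ∈ Finset.univ.erase i, z j) ∂(μ i))
          / min (ε i) 1))
        + d * ∫ z, ‖z‖ ∂ν) (1:ℝ)
  linarith [hEq, hsum_all, hS3, hK1, hKb]
end
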